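/- Let F be the homotopy fiber of a map ρ: X → Y of simply connected spaces such that all π_n(X) are finitely generated abelian groups, all π_n(Y) are ℚ-vector spaces, and π_n(ρ) ⊗ ℚ is an isomorphism for all n. Then from the long exact sequence π_{d+1}(X) → π_{d+1}(Y) → π_d(F) → π_d(X) → π_d(Y), every π_d(F) is a torsion abelian group that is an extension of a subgroup of a finitely generated torsion group by a quotient of a ℚ-vector space by a finitely generated group; in particular π_d(F) is the direct sum of a finite abelian group and finitely many copies of ℚ/ℤ. -/

import Mathlib

open TensorProduct

/-- Scalar multiplication of a `ℚ`-module as an `ℤ`-bilinear map. -/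
def qsmulBil (V : Type) [AddCommGroup V] [Module ℚ V] : V →ₗ[ℤ] ℚ →ₗ[ℤ] V where
  toFun v :=
    { toFun := fun q => q • v
      map_add' := fun a b => add_smul a b v
      map_smul' := fun n q => by
        simp only [RingHom.id_apply]
        rw [smul_assoc] }
  map_add' v w := by ext q; simp [smul_add]
  map_smul' n v := by
    ext q
    simp only [LinearMap.coe_mk, AddHom.coe_mk, LinearMap.smul_apply]
    rw [← Int.cast_smul_eq_zsmul ℚ, ← Int.cast_smul_eq_zsmul ℚ, smul_smul, smul_smul, mul_comm]
    rfl

@[simp] lemma qsmulBil_apply (V : Type) [AddCommGroup V] [Module ℚ V] (v : V) (q : ℚ) :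
    qsmulBil V v q = q • v := rfl

lemma span_range_eq_top_of_rTensor_surjective {A V : Type} [AddCommGroup A] [AddCommGroup V]
    [Module ℚ V] (f : A →+ V)
    (h : Function.Surjective (LinearMap.rTensor ℚ f.toIntLinearMap :
      TensorProduct ℤ A ℚ →ₗ[ℤ] TensorProduct ℤ V ℚ)) :
    Submodule.span ℚ (Set.range f) = ⊤ := by
  rw [eq_top_iff]
  intro v _
  obtain ⟨x, hx⟩ := h (v ⊗ₜ (1 : ℚ))
  have hv : TensorProduct.lift (qsmulBil V) (v ⊗ₜ (1 : ℚ)) = v := by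
    simp
  rw [← hv, ← hx]
  clear hx hv
  induction x using TensorProduct.induction_on with
  | zero => simp
  | tmul a q =>
      simp only [LinearMap.rTensor_tmul, TensorProduct.lift.tmul, qsmulBil_apply]
      exact Submodule.smul_mem _ q (Submodule.subset_span ⟨a, rfl⟩)
  | add x y hx hy =>
      rw [map_add, map_add]
      exact Submodule.add_mem _ hx hy

lemma exists_zsmul_eq_zero_of_rTensor_injective {B W : Type} [AddCommGroup B] [AddCommGroup W]
    [Module ℚ W] (f : B →+ W)
    (h : Function.Injective (LinearMap.rTensor ℚ f.toIntLinearMap :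
      TensorProduct ℤ B ℚ →ₗ[ℤ] TensorProduct ℤ W ℚ))
    (b : B) (hb : f b = 0) : ∃ n : ℤ, n ≠ 0 ∧ n • b = 0 := by
  by_contra hc
  push_neg at hc
  have hinj : Function.Injective (LinearMap.toSpanSingleton ℤ B b) := by
    intro m n hmn
    simp only [LinearMap.toSpanSingleton_apply] at hmn
    by_contra hne
    exact hc (m - n) (sub_ne_zero.mpr hne) (by rw [sub_smul, hmn, sub_self])
  obtain ⟨g, hg⟩ := (Module.Baer.of_divisible ℚ).injective.out
    (LinearMap.toSpanSingleton ℤ B b) hinj (LinearMap.toSpanSingleton ℤ ℚ 1)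
  have hb1 : (b ⊗ₜ (1 : ℚ) : TensorProduct ℤ B ℚ) = 0 := by
    apply h
    rw [map_zero, LinearMap.rTensor_tmul]
    have : f.toIntLinearMap b = 0 := hb
    rw [this, TensorProduct.zero_tmul]
  have h2 := congrArg (TensorProduct.lift ((qsmulBil ℚ).comp g)) hb1
  have hgb : g b = 1 := by simpa using hg 1
  simp only [TensorProduct.lift.tmul, LinearMap.comp_apply, qsmulBil_apply, map_zero,
    one_smul, hgb] at h2
  exact one_ne_zero h2

/-- Abelian-group version of the homotopy-fiber computation: given an exact
sequence A → V → G → B → W with A, B finitely generated, V, W ℚ-vector spaces,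
and A → V, B → W rational isomorphisms, the group G is the direct sum of a
finite group and finitely many copies of ℚ/ℤ. -/
theorem fiber_homotopy_group_structure
    (A V G B W : Type) [AddCommGroup A] [AddCommGroup V] [AddCommGroup G]
    [AddCommGroup B] [AddCommGroup W] [AddGroup.FG A] [AddGroup.FG B]
    [Module ℚ V] [Module ℚ W]
    (f₁ : A →+ V) (f₂ : V →+ G) (f₃ : G →+ B) (f₄ : B →+ W)
    (e₁ : Function.Exact f₁ f₂) (e₂ : Function.Exact f₂ f₃) (e₃ : Function.Exact f₃ f₄)
    (h₁ : Function.Bijective (LinearMap.rTensor ℚ f₁.toIntLinearMap :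
      TensorProduct ℤ A ℚ →ₗ[ℤ] TensorProduct ℤ V ℚ))
    (h₄ : Function.Bijective (LinearMap.rTensor ℚ f₄.toIntLinearMap :
      TensorProduct ℤ B ℚ →ₗ[ℤ] TensorProduct ℤ W ℚ)) :
    ∃ (F : Type) (_ : AddCommGroup F) (_ : Finite F) (s : ℕ),
      Nonempty (G ≃+ F × (Fin s → AddCircle (1 : ℚ))) := by
  classical
  set g₁ := f₁.toIntLinearMap with hg₁
  set g₂ := f₂.toIntLinearMap with hg₂
  set g₃ := f₃.toIntLinearMap with hg₃
  haveI : Module.Finite ℤ A := Module.Finite.iff_addGroup_fg.mpr ‹AddGroup.FG A›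
  haveI : Module.Finite ℤ B := Module.Finite.iff_addGroup_fg.mpr ‹AddGroup.FG B›
  set L : Submodule ℤ V := LinearMap.range g₁ with hL
  haveI : Module.Finite ℤ L := Module.Finite.range g₁
  haveI : IsAddTorsionFree V := ⟨fun n hn a b hab => by
    have := congrArg (fun x => ((n:ℚ)⁻¹) • x) hab
    simpa [← Nat.cast_smul_eq_nsmul ℚ, smul_smul, hn] using this⟩
  haveI : Module.Free ℤ L := inferInstance
  have hspan : Submodule.span ℚ (Set.range f₁) = ⊤ :=
    span_range_eq_top_of_rTensor_surjective f₁ h₁.surjective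
  set ι := Module.Free.ChooseBasisIndex ℤ L with hι
  set s := Fintype.card ι with hs
  set bL : Module.Basis (Fin s) ℤ L := (Module.Free.chooseBasis ℤ L).reindex (Fintype.equivFin ι)
    with hbL
  set bV : Fin s → V := fun i => (bL i : V) with hbV
  have hLspan : L = Submodule.span ℤ (Set.range bV) := by
    apply le_antisymm
    · intro x hx
      have h1 : (⟨x, hx⟩ : L) ∈ Submodule.span ℤ (Set.range bL) := Module.Basis.mem_span bL _
      have h2 : L.subtype ⟨x, hx⟩ ∈ Submodule.map L.subtype (Submodule.span ℤ (Set.range bL)) :=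
        Submodule.mem_map_of_mem h1
      rw [Submodule.map_span] at h2
      have h3 : L.subtype '' Set.range bL = Set.range bV := by
        rw [← Set.range_comp]; rfl
      rw [h3] at h2
      exact h2
    · rw [Submodule.span_le]
      rintro _ ⟨i, rfl⟩
      exact (bL i).2
  have hindepZ : LinearIndependent ℤ bV := by
    have := bL.linearIndependent.map' L.subtype (Submodule.ker_subtype L)
    exact this
  have hindep : LinearIndependent ℚ bV :=
    LinearIndependent.localization (Rₛ := ℚ) (S := nonZeroDivisors ℤ) hindepZ
  have hspanQ : ⊤ ≤ Submodule.span ℚ (Set.range bV) := by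
    rw [← hspan, Submodule.span_le]
    rintro _ ⟨a, rfl⟩
    have hmem : f₁ a ∈ L := ⟨a, rfl⟩
    rw [hLspan] at hmem
    exact Submodule.span_subset_span ℤ ℚ _ hmem
  set bQ : Module.Basis (Fin s) ℚ V := Module.Basis.mk hindep hspanQ with hbQ
  have hbQcoe : ∀ i, bQ i = bV i := fun i => Module.Basis.mk_apply hindep hspanQ i
  -- the map to (ℚ/ℤ)^s
  set Ψ : V →+ (Fin s → AddCircle (1 : ℚ)) :=
    { toFun := fun v i => ((bQ.repr v i : ℚ) : AddCircle (1 : ℚ))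
      map_zero' := by funext i; simp
      map_add' := fun v w => by
        funext i
        simp only [map_add, Finsupp.add_apply]
        rfl } with hΨ
  set Ψl : V →ₗ[ℤ] (Fin s → AddCircle (1 : ℚ)) := Ψ.toIntLinearMap with hΨl
  have hΨsurj : Function.Surjective Ψl := by
    intro h
    have hrep : ∀ i, ∃ q : ℚ, (q : AddCircle (1 : ℚ)) = h i :=
      fun i => QuotientAddGroup.mk_surjective (h i)
    choose q hq using hrep
    refine ⟨bQ.equivFun.symm q, ?_⟩
    funext i
    show ((bQ.repr (bQ.equivFun.symm q) i : ℚ) : AddCircle (1 : ℚ)) = h i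
    have heq : bQ.repr (bQ.equivFun.symm q) i = q i := by
      have h2 := congrFun (bQ.equivFun.apply_symm_apply q) i
      rwa [Module.Basis.equivFun_apply] at h2
    rw [heq]
    exact hq i
  have hker : LinearMap.ker Ψl = L := by
    ext v
    rw [LinearMap.mem_ker]
    have hrange : Set.range bV = Set.range bQ := by
      funext; rw [eq_comm]
      congr 1
      funext i
      exact hbQcoe i
    constructor
    · intro hv
      rw [hLspan, hrange, Module.Basis.mem_span_iff_repr_mem]
      intro i
      have hvi : ((bQ.repr v i : ℚ) : AddCircle (1 : ℚ)) = 0 := congrFun hv i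
      rw [QuotientAddGroup.eq_zero_iff, AddSubgroup.mem_zmultiples_iff] at hvi
      obtain ⟨k, hk⟩ := hvi
      refine ⟨k, ?_⟩
      rw [zsmul_eq_mul, mul_one] at hk
      simpa using hk
    · intro hv
      rw [hLspan, hrange, Module.Basis.mem_span_iff_repr_mem] at hv
      funext i
      obtain ⟨k, hk⟩ := hv i
      show ((bQ.repr v i : ℚ) : AddCircle (1 : ℚ)) = 0
      rw [QuotientAddGroup.eq_zero_iff, AddSubgroup.mem_zmultiples_iff]
      refine ⟨k, ?_⟩
      rw [zsmul_eq_mul, mul_one, ← hk]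
      simp
  -- the kernel of g₃ is isomorphic to (ℚ/ℤ)^s
  have hkerg₂ : LinearMap.ker g₂ = L := by
    ext v
    rw [LinearMap.mem_ker]
    exact (e₁ v)
  have hkerg₃ : LinearMap.ker g₃ = LinearMap.range g₂ := by
    ext x
    rw [LinearMap.mem_ker]
    exact (e₂ x)
  set P := Fin s → AddCircle (1 : ℚ) with hP
  set χ : ↥(LinearMap.ker g₃) ≃ₗ[ℤ] P :=
    ((LinearEquiv.ofEq _ _ hkerg₃).trans g₂.quotKerEquivRange.symm).trans
      ((Submodule.quotEquivOfEq _ _ (hkerg₂.trans hker.symm)).trans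
        (Ψl.quotKerEquivOfSurjective hΨsurj)) with hχ
  -- extend χ to a retraction of G
  obtain ⟨r, hr⟩ := (Module.Baer.of_divisible P).injective.out
    (LinearMap.ker g₃).subtype (Submodule.injective_subtype _) (χ : _ →ₗ[ℤ] P)
  -- the image of g₃ is finite
  set Q := LinearMap.range g₃ with hQ
  haveI : IsNoetherian ℤ B := inferInstance
  haveI : Module.Finite ℤ ↥Q := Module.Finite.iff_fg.mpr (IsNoetherian.noetherian Q)
  haveI : AddGroup.FG ↥Q := Module.Finite.iff_addGroup_fg.mp inferInstance
  have hQtors : AddMonoid.IsTorsion ↥Q := by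
    rintro ⟨x, hx⟩
    rw [isOfFinAddOrder_iff_zsmul_eq_zero]
    have hx4 : f₄ x = 0 := (e₃ x).mpr hx
    obtain ⟨n, hn, hnx⟩ := exists_zsmul_eq_zero_of_rTensor_injective f₄ h₄.injective x hx4
    exact ⟨n, hn, Subtype.ext (by simpa using hnx)⟩
  haveI hQfin : Finite ↥Q := AddCommGroup.finite_of_fg_torsion ↥Q hQtors
  -- the splitting
  set Φ : G →ₗ[ℤ] ↥Q × P := LinearMap.prod g₃.rangeRestrict r with hΦ
  have hΦbij : Function.Bijective Φ := by
    constructor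
    · rw [injective_iff_map_eq_zero]
      intro z hz
      have hz1 : g₃.rangeRestrict z = 0 := congrArg Prod.fst hz
      have hz2 : r z = 0 := congrArg Prod.snd hz
      have hzker : z ∈ LinearMap.ker g₃ := by
        rw [LinearMap.mem_ker]
        have := congrArg (Subtype.val) hz1
        simpa using this
      have hzero : (⟨z, hzker⟩ : ↥(LinearMap.ker g₃)) = 0 := by
        apply χ.injective
        rw [map_zero]
        show (χ : ↥(LinearMap.ker g₃) →ₗ[ℤ] P) ⟨z, hzker⟩ = 0
        rw [← hr ⟨z, hzker⟩]
        exact hz2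
      exact congrArg Subtype.val hzero
    · rintro ⟨q, p⟩
      obtain ⟨z₀, hz₀⟩ := q.2
      set k : ↥(LinearMap.ker g₃) := χ.symm (p - r z₀) with hk
      refine ⟨z₀ + (k : G), ?_⟩
      have hgk : g₃ (k : G) = 0 := k.2
      have h1 : g₃.rangeRestrict (z₀ + (k : G)) = q := by
        apply Subtype.ext
        simp [map_add, hgk, hz₀]
      have h2 : r (z₀ + (k : G)) = p := by
        have hrk : r (k : G) = p - r z₀ := by
          have h5 : r ((LinearMap.ker g₃).subtype k) = (χ : ↥(LinearMap.ker g₃) →ₗ[ℤ] P) k :=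
            hr k
          have h6 : (χ : ↥(LinearMap.ker g₃) →ₗ[ℤ] P) k = p - r z₀ := by
            show χ k = p - r z₀
            rw [hk, χ.apply_symm_apply]
          rw [← h6]
          exact h5
        rw [map_add, hrk]
        abel
      rw [hΦ]
      simp only [LinearMap.prod_apply, Function.prod_apply]
      rw [h1, h2]
  exact ⟨↥Q, inferInstance, hQfin, s, ⟨(LinearEquiv.ofBijective Φ hΦbij).toAddEquiv⟩⟩
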